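/- arXiv:1001.1673 — 4 statements merged into one kernel-verified Lean document; each statement's English description precedes it below -/
import Mathlib

section
/- Let G be a finite abelian group, H₁,...,Hₘ finite-dimensional complex Hilbert spaces, and Φ^μ : G → H_μ functions for μ = 1,...,m. Define the tensor convolution (Φ¹ ⋆ ⋯ ⋆ Φᵐ)(g) = Σ_{g₂,...,gₘ ∈ G} Φ¹(g − g₂ − ⋯ − gₘ) ⊗ Φ²(g₂) ⊗ ⋯ ⊗ Φᵐ(gₘ). Then the Hermitian operator Σ_{g∈G} |(Φ¹⋆⋯⋆Φᵐ)(g)⟩⟨(Φ¹⋆⋯⋆Φᵐ)(g)| on H₁⊗⋯⊗Hₘ is separable. -/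
noncomputable section

/-- The rank-one operator `|u⟩⟨u| : w ↦ ⟪u, w⟫ • u`. -/
def rankOne {E : Type*} [NormedAddCommGroup E] [InnerProductSpace ℂ E] (u : E) : E →L[ℂ] E :=
  (innerSL ℂ u).smulRight u

variable {m : ℕ} {H : Fin (m + 1) → Type*}
  [∀ μ, NormedAddCommGroup (H μ)] [∀ μ, InnerProductSpace ℂ (H μ)]
  {E : Type*} [NormedAddCommGroup E] [InnerProductSpace ℂ E]

/-- The tensor convolution `(Φ¹ ⋆ ⋯ ⋆ Φᵐ)(g) = Σ_{g₂,…,gₘ} Φ¹(g−g₂−⋯−gₘ)⊗Φ²(g₂)⊗⋯⊗Φᵐ(gₘ)`,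
realized through a multilinear map `T` playing the role of the tensor product. -/
def tensorConv {G : Type*} [AddCommGroup G] [Fintype G]
    (T : MultilinearMap ℂ H E) (Φ : ∀ μ, G → H μ) (g : G) : E :=
  ∑ k : Fin m → G, T fun μ => Φ μ (Fin.cons (α := fun _ => G) (g - ∑ j, k j) k μ)

/-- An operator is separable (w.r.t. the tensor structure `T`) if it is a finite sum of
positive multiples of projectors onto simple tensors. -/
def IsSeparableOp (T : MultilinearMap ℂ H E) (A : E →L[ℂ] E) : Prop :=
  ∃ (P : ℕ) (c : Fin P → ℝ) (v : Fin P → ∀ μ, H μ),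
    (∀ p, 0 < c p) ∧ A = ∑ p, (c p : ℂ) • rankOne (T (v p))

lemma addChar_sum_eq_prod {G : Type*} [AddCommGroup G] {ι : Type*} (s : Finset ι)
    (χ : AddChar G ℂ) (f : ι → G) :
    χ (∑ i ∈ s, f i) = ∏ i ∈ s, χ (f i) := by
  classical
  induction s using Finset.cons_induction with
  | empty => simp
  | cons a s ha ih =>
    rw [Finset.sum_cons, Finset.prod_cons, AddChar.map_add_eq_mul, ih]

/-- Rewrite the tensor convolution as a sum over all tuples with prescribed total sum. -/
lemma tensorConv_eq_sum_ite {G : Type*} [AddCommGroup G] [Fintype G] [DecidableEq G]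
    (T : MultilinearMap ℂ H E) (Φ : ∀ μ, G → H μ) (g : G) :
    tensorConv T Φ g
      = ∑ h : Fin (m + 1) → G,
          if (∑ μ, h μ) = g then T (fun μ => Φ μ (h μ)) else 0 := by
  rw [← Equiv.sum_comp (Fin.consEquiv (fun _ : Fin (m + 1) => G))
    (fun h => if (∑ μ, h μ) = g then T (fun μ => Φ μ (h μ)) else 0),
    Fintype.sum_prod_type, tensorConv, Finset.sum_comm]
  refine Finset.sum_congr rfl fun k _ => ?_
  have hsum : ∀ a : G, (∑ μ, (Fin.consEquiv (fun _ : Fin (m + 1) => G)) (a, k) μ)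
      = a + ∑ j, k j := by
    intro a; simpa using Fin.sum_cons a k
  simp only [hsum]
  have hcond : ∀ a : G, (a + ∑ j, k j = g) ↔ (a = g - ∑ j, k j) := by
    intro a
    constructor
    · intro h; exact eq_sub_of_add_eq h
    · intro h; rw [h, sub_add_cancel]
  simp only [hcond]
  rw [Finset.sum_ite_eq' Finset.univ (g - ∑ j, k j)
    (fun a => T fun μ => Φ μ ((Fin.consEquiv (fun _ : Fin (m + 1) => G)) (a, k) μ))]
  simp [Fin.consEquiv]

/-- Applying `T` to the Fourier-transformed tuples. -/
lemma map_sum_addChar {G : Type*} [AddCommGroup G] [Fintype G]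
    (T : MultilinearMap ℂ H E) (Φ : ∀ μ, G → H μ) (χ : AddChar G ℂ) :
    T (fun μ => ∑ x : G, χ x • Φ μ x)
      = ∑ h : Fin (m + 1) → G, χ (∑ μ, h μ) • T (fun μ => Φ μ (h μ)) := by
  classical
  rw [MultilinearMap.map_sum]
  refine Finset.sum_congr rfl fun h _ => ?_
  rw [MultilinearMap.map_smul_univ, addChar_sum_eq_prod]

/-- The operator `Σ_g |(Φ¹⋆⋯⋆Φᵐ)(g)⟩⟨(Φ¹⋆⋯⋆Φᵐ)(g)|` is separable. -/
theorem sum_rankOne_tensorConv_isSeparable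
    [∀ μ, FiniteDimensional ℂ (H μ)] [FiniteDimensional ℂ E]
    {G : Type*} [AddCommGroup G] [Fintype G]
    (T : MultilinearMap ℂ H E)
    (hT : ∀ v w : ∀ μ, H μ, (inner ℂ (T v) (T w) : ℂ) = ∏ μ, (inner ℂ (v μ) (w μ) : ℂ))
    (Φ : ∀ μ, G → H μ) :
    IsSeparableOp T (∑ g : G, rankOne (tensorConv T Φ g)) := by
  classical
  set N : ℝ := (Fintype.card G : ℝ) with hNdef
  have hN : 0 < N := by
    simpa [hNdef] using (Nat.cast_pos.mpr (Fintype.card_pos (α := G)) : (0:ℝ) < _)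
  set e : Fin (Fintype.card (AddChar G ℂ)) ≃ AddChar G ℂ :=
    (Fintype.equivFin (AddChar G ℂ)).symm with he
  refine ⟨Fintype.card (AddChar G ℂ), fun _ => N⁻¹,
    fun p μ => ∑ x : G, (e p) x • Φ μ x, fun _ => inv_pos.mpr hN, ?_⟩
  have hre : (∑ p, ((N⁻¹ : ℝ) : ℂ) • rankOne (T (fun μ => ∑ x : G, (e p) x • Φ μ x)))
      = ∑ χ : AddChar G ℂ, ((N⁻¹ : ℝ) : ℂ) • rankOne (T (fun μ => ∑ x : G, χ x • Φ μ x)) :=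
    Fintype.sum_equiv e _ _ (fun p => rfl)
  rw [hre]
  ext w
  simp only [ContinuousLinearMap.sum_apply, ContinuousLinearMap.smul_apply]
  have hrk : ∀ (u : E), rankOne u w = (inner ℂ u w : ℂ) • u := fun u => rfl
  simp only [hrk]
  set σ : (Fin (m + 1) → G) → G := fun h => ∑ μ, h μ with hσ
  set u : (Fin (m + 1) → G) → E := fun h => T (fun μ => Φ μ (h μ)) with hu
  have scalar : ∀ a b : G, (∑ χ : AddChar G ℂ, (starRingEnd ℂ) (χ a) * χ b)
      = if b = a then (N : ℂ) else 0 := by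
    intro a b
    have hc : ∀ χ : AddChar G ℂ, (starRingEnd ℂ) (χ a) * χ b = χ (b - a) := by
      intro χ
      rw [← AddChar.map_neg_eq_conj, sub_eq_add_neg, AddChar.map_add_eq_mul, mul_comm]
    simp only [hc]
    rw [AddChar.sum_apply_eq_ite]
    simp [sub_eq_zero, hNdef]
  calc
    ∑ g : G, (inner ℂ (tensorConv T Φ g) w : ℂ) • tensorConv T Φ g
        = ∑ g : G, ∑ h' : Fin (m + 1) → G, ∑ h : Fin (m + 1) → G,
            (if σ h' = g then (inner ℂ (u h') w : ℂ) else 0) •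
              (if σ h = g then u h else 0) := by
          refine Finset.sum_congr rfl fun g _ => ?_
          rw [tensorConv_eq_sum_ite, sum_inner, Finset.sum_smul]
          refine Finset.sum_congr rfl fun h' _ => ?_
          rw [Finset.smul_sum]
          refine Finset.sum_congr rfl fun h _ => ?_
          congr 1
          by_cases hc : σ h' = g
          · simp only [hσ] at hc
            simp [hσ, hu, hc]
          · simp only [hσ] at hc
            simp [hσ, hu, hc]
    _ = ∑ h' : Fin (m + 1) → G, ∑ h : Fin (m + 1) → G,
          (if σ h = σ h' then (inner ℂ (u h') w : ℂ) • u h else 0) := by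
          rw [Finset.sum_comm]
          refine Finset.sum_congr rfl fun h' _ => ?_
          rw [Finset.sum_comm]
          refine Finset.sum_congr rfl fun h _ => ?_
          have hsplit : ∀ g : G, (if σ h' = g then (inner ℂ (u h') w : ℂ) else 0) •
              (if σ h = g then u h else 0)
              = if σ h' = g then (if σ h = g then (inner ℂ (u h') w : ℂ) • u h else 0) else 0 := by
            intro g
            by_cases h1 : σ h' = g <;> by_cases h2 : σ h = g <;> simp [h1, h2]
          simp only [hsplit]
          rw [Finset.sum_ite_eq Finset.univ (σ h')
            (fun g => if σ h = g then (inner ℂ (u h') w : ℂ) • u h else 0)]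
          simp
    _ = ∑ χ : AddChar G ℂ, ((N⁻¹ : ℝ) : ℂ) •
          ((inner ℂ (T fun μ => ∑ x : G, χ x • Φ μ x) w : ℂ) •
            (T fun μ => ∑ x : G, χ x • Φ μ x)) := by
          refine Eq.symm ?_
          have expand : ∀ χ : AddChar G ℂ,
              (inner ℂ (T fun μ => ∑ x : G, χ x • Φ μ x) w : ℂ) •
                (T fun μ => ∑ x : G, χ x • Φ μ x)
              = ∑ h' : Fin (m + 1) → G, ∑ h : Fin (m + 1) → G,
                  (((starRingEnd ℂ) (χ (σ h')) * χ (σ h)) *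
                    (inner ℂ (u h') w : ℂ)) • u h := by
            intro χ
            rw [map_sum_addChar, sum_inner, Finset.sum_smul]
            refine Finset.sum_congr rfl fun h' _ => ?_
            rw [Finset.smul_sum]
            refine Finset.sum_congr rfl fun h _ => ?_
            rw [inner_smul_left, smul_smul]
            simp only [hσ, hu]
            congr 1
            ring
          simp only [expand, Finset.smul_sum]
          rw [Finset.sum_comm]
          refine Finset.sum_congr rfl fun h' _ => ?_
          rw [Finset.sum_comm]
          refine Finset.sum_congr rfl fun h _ => ?_
          have hpull : ∀ χ : AddChar G ℂ,
              ((N⁻¹ : ℝ) : ℂ) • ((((starRingEnd ℂ) (χ (σ h')) * χ (σ h)) *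
                (inner ℂ (u h') w : ℂ)) • u h)
              = ((starRingEnd ℂ) (χ (σ h')) * χ (σ h)) •
                  ((((N⁻¹ : ℝ) : ℂ) * (inner ℂ (u h') w : ℂ)) • u h) := by
            intro χ
            rw [smul_smul, smul_smul]
            ring_nf
          simp only [hpull]
          rw [← Finset.sum_smul, scalar (σ h') (σ h)]
          by_cases hc : σ h = σ h'
          · simp only [hc, if_pos rfl, smul_smul]
            congr 1
            have hNne : (N : ℂ) ≠ 0 := Complex.ofReal_ne_zero.mpr hN.ne'
            push_cast
            field_simp
          · simp [hc]
end
end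

section
/- Let H = H₁ ⊗ ⋯ ⊗ Hₘ be a finite-dimensional Hilbert tensor product. A Hermitian operator A on H is separable if and only if L(A) ≥ 0 for every real linear functional L on the space of Hermitian operators that is nonnegative on all separable projectors |v¹⊗⋯⊗vᵐ⟩⟨v¹⊗⋯⊗vᵐ|. -/
set_option maxHeartbeats 1000000
set_option synthInstance.maxHeartbeats 400000

noncomputable section

variable {m : ℕ} {H : Fin (m + 1) → Type*}
  [∀ μ, NormedAddCommGroup (H μ)] [∀ μ, InnerProductSpace ℂ (H μ)]
  {E : Type*} [NormedAddCommGroup E] [InnerProductSpace ℂ E]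

/-! ### Auxiliary lemmas -/

private lemma rankOne_zero : rankOne (0 : E) = 0 := by ext w; simp [rankOne]

private lemma rankOne_smul (a : ℂ) (u : E) : rankOne (a • u) = (‖a‖ ^ 2 : ℝ) • rankOne u := by
  ext w
  show (inner ℂ (a • u) w : ℂ) • (a • u) = ((‖a‖ ^ 2 : ℝ) : ℂ) • ((inner ℂ u w : ℂ) • u)
  rw [inner_smul_left, smul_smul, smul_smul]
  congr 1
  rw [Complex.ofReal_pow, show ((‖a‖ : ℂ)) ^ 2 = (starRingEnd ℂ) a * a from (RCLike.conj_mul a).symm]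
  ring

private lemma continuous_rankOne : Continuous fun u : E => rankOne u :=
  isBoundedBilinearMap_smulRight.continuous.comp ((innerSL ℂ).continuous.prodMk continuous_id)

/-- The set of nonnegative combinations of separable projectors. -/
private def sepSet (T : MultilinearMap ℂ H E) : Set (E →L[ℂ] E) :=
  {A | ∃ (P : ℕ) (c : Fin P → ℝ) (v : Fin P → ∀ μ, H μ),
    (∀ p, 0 ≤ c p) ∧ A = ∑ p, c p • rankOne (T (v p))}

private lemma zero_mem_sepSet (T : MultilinearMap ℂ H E) : 0 ∈ sepSet T :=
  ⟨0, Fin.elim0, Fin.elim0, fun p => p.elim0, by simp⟩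

private lemma single_mem_sepSet (T : MultilinearMap ℂ H E) {c : ℝ} (hc : 0 ≤ c)
    (v : ∀ μ, H μ) : c • rankOne (T v) ∈ sepSet T :=
  ⟨1, fun _ => c, fun _ => v, fun _ => hc, by simp⟩

private lemma smul_mem_sepSet (T : MultilinearMap ℂ H E) {A : E →L[ℂ] E}
    (hA : A ∈ sepSet T) {t : ℝ} (ht : 0 ≤ t) : t • A ∈ sepSet T := by
  obtain ⟨P, c, v, hc, rfl⟩ := hA
  exact ⟨P, fun p => t * c p, v, fun p => mul_nonneg ht (hc p),
    by rw [Finset.smul_sum]; exact Finset.sum_congr rfl fun p _ => by dsimp only; exact (mul_smul _ _ _).symm⟩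

private lemma add_mem_sepSet (T : MultilinearMap ℂ H E) {A B : E →L[ℂ] E}
    (hA : A ∈ sepSet T) (hB : B ∈ sepSet T) : A + B ∈ sepSet T := by
  obtain ⟨P, c, v, hc, rfl⟩ := hA
  obtain ⟨Q, d, w, hd, rfl⟩ := hB
  refine ⟨P + Q, Fin.append c d, Fin.append v w, ?_, ?_⟩
  · intro p
    refine Fin.addCases (fun i => ?_) (fun j => ?_) p
    · rw [Fin.append_left]; exact hc i
    · rw [Fin.append_right]; exact hd j
  · rw [Fin.sum_univ_add]
    congr 1
    · exact Finset.sum_congr rfl fun i _ => by rw [Fin.append_left, Fin.append_left]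
    · exact Finset.sum_congr rfl fun j _ => by rw [Fin.append_right, Fin.append_right]

private lemma convex_sepSet (T : MultilinearMap ℂ H E) : Convex ℝ (sepSet T) :=
  fun _ hA _ hB a b ha hb _ =>
    add_mem_sepSet T (smul_mem_sepSet T hA ha) (smul_mem_sepSet T hB hb)

private lemma isSeparableOp_iff_mem_sepSet (T : MultilinearMap ℂ H E) (A : E →L[ℂ] E) :
    IsSeparableOp T A ↔ A ∈ sepSet T := by
  constructor
  · rintro ⟨P, c, v, hc, rfl⟩
    exact ⟨P, c, v, fun p => (hc p).le, rfl⟩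
  · rintro ⟨P, c, v, hc, rfl⟩
    classical
    refine ⟨P, fun p => if c p = 0 then 1 else c p,
      fun p => if c p = 0 then (fun _ => 0) else v p, ?_, ?_⟩
    · intro p
      by_cases h : c p = 0
      · simp [h]
      · simp only [h, if_false]
        exact (hc p).lt_of_ne (Ne.symm h)
    · refine Finset.sum_congr rfl fun p _ => ?_
      dsimp only
      by_cases h : c p = 0
      · rw [if_pos h, if_pos h, h, zero_smul]
        rw [show T (fun _ => (0 : H _)) = 0 from T.map_coord_zero (0 : Fin (m + 1)) rfl,
          rankOne_zero, smul_zero]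
      · rw [if_neg h, if_neg h]
        rfl

private lemma norm_T_eq (T : MultilinearMap ℂ H E)
    (hT : ∀ v w : ∀ μ, H μ, (inner ℂ (T v) (T w) : ℂ) = ∏ μ, (inner ℂ (v μ) (w μ) : ℂ))
    (v : ∀ μ, H μ) : ‖T v‖ = ∏ μ, ‖v μ‖ := by
  have h := hT v v
  simp only [inner_self_eq_norm_sq_to_K] at h
  have h2 : ((‖T v‖ ^ 2 : ℝ) : ℂ) = ((∏ μ, ‖v μ‖ ^ 2 : ℝ) : ℂ) := by
    push_cast
    simpa using h
  have h3 := Complex.ofReal_injective h2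
  have h4 : (∏ μ, ‖v μ‖ ^ 2) = (∏ μ, ‖v μ‖) ^ 2 := by rw [Finset.prod_pow]
  nlinarith [norm_nonneg (T v),
    Finset.prod_nonneg (fun μ (_ : μ ∈ Finset.univ) => norm_nonneg (v μ))]

private lemma continuous_T (T : MultilinearMap ℂ H E)
    (hT : ∀ v w : ∀ μ, H μ, (inner ℂ (T v) (T w) : ℂ) = ∏ μ, (inner ℂ (v μ) (w μ) : ℂ)) :
    Continuous fun v : ∀ μ, H μ => T v := by
  have := (T.mkContinuous 1 (fun v => by rw [norm_T_eq T hT v, one_mul])).cont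
  simpa using this

/-- Real part of the trace, as a real-linear functional. -/
private def traceRe (E : Type*) [NormedAddCommGroup E] [InnerProductSpace ℂ E]
    [FiniteDimensional ℂ E] : (E →L[ℂ] E) →ₗ[ℝ] ℝ where
  toFun B := ∑ i, (inner ℂ ((stdOrthonormalBasis ℂ E) i) (B ((stdOrthonormalBasis ℂ E) i)) : ℂ).re
  map_add' B C := by
    simp [ContinuousLinearMap.add_apply, inner_add_right, Finset.sum_add_distrib]
  map_smul' r B := by
    simp only [ContinuousLinearMap.coe_smul', Pi.smul_apply, RingHom.id_apply, smul_eq_mul,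
      Finset.mul_sum]
    congr 1; ext i
    rw [show r • B (stdOrthonormalBasis ℂ E i) = (r : ℂ) • B (stdOrthonormalBasis ℂ E i) from rfl,
      inner_smul_right, Complex.re_ofReal_mul]

private lemma traceRe_rankOne [FiniteDimensional ℂ E] (u : E) :
    traceRe E (rankOne u) = ‖u‖ ^ 2 := by
  have h := (stdOrthonormalBasis ℂ E).sum_inner_mul_inner u u
  have key : ∀ i, (inner ℂ ((stdOrthonormalBasis ℂ E) i)
      (rankOne u ((stdOrthonormalBasis ℂ E) i)) : ℂ)
      = inner ℂ u ((stdOrthonormalBasis ℂ E) i) * inner ℂ ((stdOrthonormalBasis ℂ E) i) u := by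
    intro i
    show (inner ℂ _ ((inner ℂ u _ : ℂ) • u) : ℂ) = _
    rw [inner_smul_right]
  unfold traceRe
  simp only [LinearMap.coe_mk, AddHom.coe_mk, key]
  rw [← Complex.re_sum, h]
  exact inner_self_eq_norm_sq (𝕜 := ℂ) u

/-- Every nonnegative multiple of a separable projector can be rewritten with unit vectors. -/
private lemma exists_unit_rep (T : MultilinearMap ℂ H E)
    (u₀ : ∀ μ, H μ) (hu₀ : ∀ μ, ‖u₀ μ‖ = 1)
    {c : ℝ} (hc : 0 ≤ c) (v : ∀ μ, H μ) :
    ∃ (c' : ℝ) (w : ∀ μ, H μ), 0 ≤ c' ∧ (∀ μ, ‖w μ‖ = 1) ∧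
      c • rankOne (T v) = c' • rankOne (T w) := by
  by_cases h0 : ∀ μ, v μ ≠ 0
  · set w : ∀ μ, H μ := fun μ => ((‖v μ‖ : ℂ))⁻¹ • v μ with hw_def
    have hnz : ∀ μ, (‖v μ‖ : ℝ) ≠ 0 := fun μ => norm_ne_zero_iff.2 (h0 μ)
    have hw : ∀ μ, ‖w μ‖ = 1 := by
      intro μ
      rw [hw_def]
      simp only [norm_smul, norm_inv, Complex.norm_real, Real.norm_eq_abs,
        abs_of_nonneg (norm_nonneg (v μ))]
      exact inv_mul_cancel₀ (hnz μ)
    have hv : v = fun μ => ((‖v μ‖ : ℂ)) • w μ := by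
      funext μ
      rw [hw_def]
      rw [smul_smul, mul_inv_cancel₀ (by exact_mod_cast hnz μ), one_smul]
    refine ⟨c * (∏ μ, ‖v μ‖) ^ 2, w, by positivity, hw, ?_⟩
    conv_lhs => rw [hv]
    rw [T.map_smul_univ (fun μ => ((‖v μ‖ : ℂ))) w, rankOne_smul, smul_smul]
    congr 2
    rw [norm_prod]
    congr 1
    refine Finset.prod_congr rfl fun μ _ => ?_
    simp [Complex.norm_real, abs_of_nonneg (norm_nonneg (v μ))]
  · push_neg at h0
    obtain ⟨μ, hμ⟩ := h0
    refine ⟨0, u₀, le_refl 0, hu₀, ?_⟩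
    rw [T.map_coord_zero μ hμ, rankOne_zero, smul_zero, zero_smul]

/-- Carathéodory-type bound: any nonnegative combination of unit separable projectors can be
written with at most `finrank + 1` terms. -/
private lemma caratheodory_bound [FiniteDimensional ℂ E] (T : MultilinearMap ℂ H E)
    (u₀ : ∀ μ, H μ) (hu₀ : ∀ μ, ‖u₀ μ‖ = 1) :
    ∀ (P : ℕ) (c : Fin P → ℝ) (v : Fin P → ∀ μ, H μ),
      (∀ p, 0 ≤ c p) → (∀ p μ, ‖v p μ‖ = 1) →
      ∃ (c' : Fin (Module.finrank ℝ (E →L[ℂ] E) + 1) → ℝ)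
        (v' : Fin (Module.finrank ℝ (E →L[ℂ] E) + 1) → ∀ μ, H μ),
        (∀ i, 0 ≤ c' i) ∧ (∀ i μ, ‖v' i μ‖ = 1) ∧
        ∑ p, c p • rankOne (T (v p)) = ∑ i, c' i • rankOne (T (v' i)) := by
  classical
  set n := Module.finrank ℝ (E →L[ℂ] E) + 1 with hn
  -- padding step
  have pad : ∀ (P : ℕ), P ≤ n → ∀ (c : Fin P → ℝ) (v : Fin P → ∀ μ, H μ),
      (∀ p, 0 ≤ c p) → (∀ p μ, ‖v p μ‖ = 1) →
      ∃ (c' : Fin n → ℝ) (v' : Fin n → ∀ μ, H μ),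
        (∀ i, 0 ≤ c' i) ∧ (∀ i μ, ‖v' i μ‖ = 1) ∧
        ∑ p, c p • rankOne (T (v p)) = ∑ i, c' i • rankOne (T (v' i)) := by
    intro P hPn c v hc hv
    set g : ℕ → (E →L[ℂ] E) :=
      fun j => if h : j < P then c ⟨j, h⟩ • rankOne (T (v ⟨j, h⟩)) else 0 with hg
    refine ⟨fun j => if h : (j : ℕ) < P then c ⟨j, h⟩ else 0,
      fun j => if h : (j : ℕ) < P then v ⟨j, h⟩ else u₀, ?_, ?_, ?_⟩
    · intro j; dsimp only; split
      · exact hc _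
      · exact le_refl 0
    · intro j μ; dsimp only; split
      · exact hv _ μ
      · exact hu₀ μ
    · calc ∑ p : Fin P, c p • rankOne (T (v p)) = ∑ j ∈ Finset.range P, g j := by
            rw [← Fin.sum_univ_eq_sum_range g P]
            exact Finset.sum_congr rfl fun p _ => by simp [hg, p.isLt]
        _ = ∑ j ∈ Finset.range n, g j := by
            refine Finset.sum_subset (Finset.range_subset_range.2 hPn) fun j _ hj => ?_
            rw [Finset.mem_range] at hj
            simp [hg, hj]
        _ = _ := by
            rw [← Fin.sum_univ_eq_sum_range g n]
            refine Finset.sum_congr rfl fun j _ => ?_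
            by_cases h : (j : ℕ) < P <;> simp [hg, h]
  intro P
  induction P with
  | zero => exact pad 0 (Nat.zero_le n)
  | succ P' ih =>
    intro c v hc hv
    by_cases hPn : P' + 1 ≤ n
    · exact pad (P' + 1) hPn c v hc hv
    · -- linear dependence reduction
      push_neg at hPn
      set k : Fin (P' + 1) → (E →L[ℂ] E) := fun p => rankOne (T (v p)) with hk
      have hdep : ¬ LinearIndependent ℝ k := by
        intro hli
        have := hli.fintype_card_le_finrank
        simp only [Fintype.card_fin] at this
        omega
      obtain ⟨d₁, hd₁sum, q₁, hq₁⟩ := Fintype.not_linearIndependent_iff.mp hdep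
      obtain ⟨d, hdsum, q, hq⟩ : ∃ d : Fin (P' + 1) → ℝ,
          ∑ i, d i • k i = 0 ∧ ∃ q, 0 < d q := by
        rcases lt_trichotomy (d₁ q₁) 0 with h | h | h
        · refine ⟨-d₁, ?_, q₁, by simp only [Pi.neg_apply]; linarith⟩
          simp only [Pi.neg_apply, neg_smul]
          rw [Finset.sum_neg_distrib, hd₁sum, neg_zero]
        · exact absurd h hq₁
        · exact ⟨d₁, hd₁sum, q₁, h⟩
      set s : Finset (Fin (P' + 1)) := Finset.univ.filter (fun p => 0 < d p) with hs
      have hq_mem : q ∈ s := by simp [hs, hq]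
      obtain ⟨p₀, hp₀, hmin⟩ := s.exists_min_image (fun p => c p / d p) ⟨q, hq_mem⟩
      have hd₀ : 0 < d p₀ := (Finset.mem_filter.1 hp₀).2
      set r := c p₀ / d p₀ with hr
      have hr0 : 0 ≤ r := div_nonneg (hc p₀) hd₀.le
      set c' : Fin (P' + 1) → ℝ := fun p => c p - r * d p with hc'_def
      have hc' : ∀ p, 0 ≤ c' p := by
        intro p
        rw [hc'_def]
        by_cases h : 0 < d p
        · have hle : r ≤ c p / d p := hmin p (by simp [hs, h])
          have := mul_le_mul_of_nonneg_right hle h.le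
          rw [div_mul_cancel₀ _ h.ne'] at this
          dsimp only
          linarith
        · push_neg at h
          have h1 : r * d p ≤ 0 := mul_nonpos_of_nonneg_of_nonpos hr0 h
          dsimp only
          linarith [hc p]
      have hc'p₀ : c' p₀ = 0 := by
        rw [hc'_def]
        dsimp only
        rw [hr, div_mul_cancel₀ _ hd₀.ne']
        ring
      have hsum : ∑ p, c' p • k p = ∑ p, c p • k p := by
        simp only [hc'_def, sub_smul, Finset.sum_sub_distrib]
        rw [show ∑ p, (r * d p) • k p = r • ∑ p, d p • k p by
          rw [Finset.smul_sum]; exact Finset.sum_congr rfl fun p _ => mul_smul _ _ _]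
        rw [hdsum, smul_zero, sub_zero]
      have hdrop : ∑ p, c' p • k p
          = ∑ i : Fin P', c' (p₀.succAbove i) • k (p₀.succAbove i) := by
        rw [Fin.sum_univ_succAbove (fun p => c' p • k p) p₀, hc'p₀, zero_smul, zero_add]
      obtain ⟨c'', v'', h1, h2, h3⟩ := ih (fun i => c' (p₀.succAbove i))
        (fun i => v (p₀.succAbove i)) (fun i => hc' _) (fun i μ => hv _ μ)
      refine ⟨c'', v'', h1, h2, ?_⟩
      rw [show ∑ p, c p • rankOne (T (v p)) = ∑ p, c p • k p from rfl, ← hsum, hdrop]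
      exact h3

private lemma isClosed_sepSet [∀ μ, FiniteDimensional ℂ (H μ)] [FiniteDimensional ℂ E]
    (T : MultilinearMap ℂ H E)
    (hT : ∀ v w : ∀ μ, H μ, (inner ℂ (T v) (T w) : ℂ) = ∏ μ, (inner ℂ (v μ) (w μ) : ℂ))
    (u₀ : ∀ μ, H μ) (hu₀ : ∀ μ, ‖u₀ μ‖ = 1) : IsClosed (sepSet T) := by
  classical
  set n := Module.finrank ℝ (E →L[ℂ] E) + 1 with hn
  set g : (Fin n → ℝ) × (Fin n → ∀ μ, H μ) → (E →L[ℂ] E) :=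
    fun p => ∑ i, p.1 i • rankOne (T (p.2 i)) with hg
  have hgcont : Continuous g := by
    refine continuous_finset_sum _ fun i _ => Continuous.smul (f := fun p : (Fin n → ℝ) × (Fin n → ∀ μ, H μ) => p.1 i)
      (g := fun p : (Fin n → ℝ) × (Fin n → ∀ μ, H μ) => rankOne (T (p.2 i))) ?_ ?_
    · exact (continuous_apply i).comp continuous_fst
    · exact (continuous_rankOne.comp (continuous_T T hT)).comp
        ((continuous_apply i).comp continuous_snd)
  have hrep : sepSet T = {A | ∃ (c : Fin n → ℝ) (v : Fin n → ∀ μ, H μ),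
      (∀ i, 0 ≤ c i) ∧ (∀ i μ, ‖v i μ‖ = 1) ∧ A = g (c, v)} := by
    ext A
    constructor
    · rintro ⟨P, c, v, hc, rfl⟩
      have hrw := fun p => exists_unit_rep T u₀ hu₀ (hc p) (v p)
      choose c₁ w hcnn hwunit heq using hrw
      have : ∑ p, c p • rankOne (T (v p)) = ∑ p, c₁ p • rankOne (T (w p)) :=
        Finset.sum_congr rfl fun p _ => heq p
      rw [this]
      obtain ⟨c', v', h1, h2, h3⟩ := caratheodory_bound T u₀ hu₀ P c₁ w hcnn hwunit
      exact ⟨c', v', h1, h2, h3⟩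
    · rintro ⟨c, v, hc, _, rfl⟩
      exact ⟨n, c, v, hc, rfl⟩
  rw [hrep]
  apply IsSeqClosed.isClosed
  intro x p hx hlim
  choose cs vs h1 h2 h3 using hx
  -- the traces converge, so the coefficients are bounded
  have htr : ∀ j, traceRe E (x j) = ∑ i, cs j i := by
    intro j
    rw [h3 j]
    rw [map_sum]
    refine Finset.sum_congr rfl fun i _ => ?_
    rw [LinearMap.map_smul, traceRe_rankOne, norm_T_eq T hT, smul_eq_mul]
    rw [Finset.prod_congr rfl fun μ _ => h2 j i μ]
    simp
  have htt : Filter.Tendsto (fun j => traceRe E (x j)) Filter.atTop (nhds (traceRe E p)) :=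
    ((traceRe E).continuous_of_finiteDimensional.tendsto p).comp hlim
  obtain ⟨M, hM⟩ := htt.bddAbove_range
  have hcsM : ∀ j i, cs j i ≤ M := by
    intro j i
    have h4 : cs j i ≤ ∑ i', cs j i' :=
      Finset.single_le_sum (fun i' _ => h1 j i') (Finset.mem_univ i)
    have h5 : traceRe E (x j) ≤ M := hM ⟨j, rfl⟩
    rw [htr j] at h5
    linarith
  -- compactness
  have hK1 : IsCompact {c : Fin n → ℝ | ∀ i, c i ∈ Set.Icc 0 M} := by
    have : {c : Fin n → ℝ | ∀ i, c i ∈ Set.Icc 0 M}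
        = Set.pi Set.univ (fun _ => Set.Icc 0 M) := by
      ext c; simp [Set.mem_pi, Pi.le_def, forall_and]
    rw [this]; exact isCompact_univ_pi fun _ => isCompact_Icc
  have hK2 : IsCompact (Set.pi Set.univ
      fun _ : Fin n => Set.pi Set.univ fun μ => Metric.sphere (0 : H μ) 1) :=
    isCompact_univ_pi fun _ => isCompact_univ_pi fun μ => isCompact_sphere _ _
  have hK : IsCompact ({c : Fin n → ℝ | ∀ i, c i ∈ Set.Icc 0 M} ×ˢ
      (Set.pi Set.univ fun _ : Fin n => Set.pi Set.univ fun μ => Metric.sphere (0 : H μ) 1)) :=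
    hK1.prod hK2
  have hmem : ∀ j, (cs j, vs j) ∈ ({c : Fin n → ℝ | ∀ i, c i ∈ Set.Icc 0 M} ×ˢ
      (Set.pi Set.univ fun _ : Fin n => Set.pi Set.univ fun μ => Metric.sphere (0 : H μ) 1)) := by
    intro j
    constructor
    · exact fun i => ⟨h1 j i, hcsM j i⟩
    · intro i _
      intro μ _
      simpa using h2 j i μ
  obtain ⟨q, hqK, φ, hφ, hconv⟩ := hK.tendsto_subseq hmem
  have hglim : Filter.Tendsto (fun j => g ((fun j' => (cs j', vs j')) (φ j)))
      Filter.atTop (nhds (g q)) := (hgcont.tendsto q).comp hconv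
  have hxeq : (fun j => g ((fun j' => (cs j', vs j')) (φ j))) = fun j => x (φ j) := by
    funext j
    exact (h3 (φ j)).symm
  rw [hxeq] at hglim
  have hxlim : Filter.Tendsto (fun j => x (φ j)) Filter.atTop (nhds p) :=
    hlim.comp hφ.tendsto_atTop
  have hpq : p = g q := tendsto_nhds_unique hxlim hglim
  refine ⟨q.1, q.2, ?_, ?_, by rw [hpq]⟩
  · exact fun i => (hqK.1 i).1
  · intro i μ
    have := hqK.2 i (Set.mem_univ i) μ (Set.mem_univ μ)
    simpa using this

/-- A Hermitian operator `A` is separable iff `L(A) ≥ 0` for every real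
linear functional `L` which is nonnegative on all separable projectors. -/
theorem isSeparableOp_iff_dual_nonneg
    [∀ μ, FiniteDimensional ℂ (H μ)] [FiniteDimensional ℂ E]
    (T : MultilinearMap ℂ H E)
    (hT : ∀ v w : ∀ μ, H μ, (inner ℂ (T v) (T w) : ℂ) = ∏ μ, (inner ℂ (v μ) (w μ) : ℂ))
    (A : E →L[ℂ] E) (hA : ContinuousLinearMap.adjoint A = A) :
    IsSeparableOp T A ↔
      ∀ L : (E →L[ℂ] E) →ₗ[ℝ] ℝ,
        (∀ v : ∀ μ, H μ, 0 ≤ L (rankOne (T v))) → 0 ≤ L A := by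
  rw [isSeparableOp_iff_mem_sepSet]
  constructor
  · rintro ⟨P, c, v, hc, rfl⟩ L hL
    rw [map_sum]
    refine Finset.sum_nonneg fun p _ => ?_
    rw [LinearMap.map_smul, smul_eq_mul]
    exact mul_nonneg (hc p) (hL (v p))
  · intro hL
    by_cases hnt : ∀ μ, ∃ u : H μ, ‖u‖ = 1
    · choose u₀ hu₀ using hnt
      by_contra hmem
      obtain ⟨f, u, hfA, hfS⟩ := geometric_hahn_banach_point_closed
        (convex_sepSet T) (isClosed_sepSet T hT u₀ hu₀) hmem
      have hu0 : u < 0 := by simpa using hfS 0 (zero_mem_sepSet T)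
      have hpos : ∀ v : ∀ μ, H μ, 0 ≤ f (rankOne (T v)) := by
        intro v
        by_contra hneg
        push_neg at hneg
        have ht : (0 : ℝ) ≤ u / f (rankOne (T v)) := (div_pos_of_neg_of_neg hu0 hneg).le
        have hmem1 : (u / f (rankOne (T v))) • rankOne (T v) ∈ sepSet T :=
          single_mem_sepSet T ht v
        have h5 := hfS _ hmem1
        rw [map_smul, smul_eq_mul, div_mul_cancel₀ _ hneg.ne] at h5
        exact lt_irrefl u h5
      have h6 := hL f.toLinearMap hpos
      have h7 : f A < 0 := lt_trans hfA hu0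
      exact absurd h6 (not_le.2 h7)
    · push_neg at hnt
      obtain ⟨μ₀, hμ₀⟩ := hnt
      have hzero : ∀ x : H μ₀, x = 0 := by
        intro x
        by_contra hx
        refine hμ₀ ((‖x‖⁻¹ : ℂ) • x) ?_
        have hnx : ‖x‖ ≠ 0 := norm_ne_zero_iff.2 hx
        rw [norm_smul, norm_inv]
        rw [show ‖((‖x‖ : ℂ))‖ = ‖x‖ by
          simp [Complex.norm_real, abs_of_nonneg (norm_nonneg x)]]
        exact inv_mul_cancel₀ hnx
      have hT0 : ∀ v : ∀ μ, H μ, T v = 0 := fun v => T.map_coord_zero μ₀ (hzero _)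
      have hA0 : ∀ L : (E →L[ℂ] E) →ₗ[ℝ] ℝ, L A = 0 := by
        intro L
        have hprem : ∀ L' : (E →L[ℂ] E) →ₗ[ℝ] ℝ,
            ∀ v : ∀ μ, H μ, (0 : ℝ) ≤ L' (rankOne (T v)) := by
          intro L' v
          rw [hT0 v, rankOne_zero, map_zero]
        have hL1 := hL L (hprem L)
        have hL2 := hL (-L) (hprem (-L))
        simp only [LinearMap.neg_apply, Left.nonneg_neg_iff] at hL2
        linarith
      have hA' : A = 0 := (Module.forall_dual_apply_eq_zero_iff ℝ A).mp hA0
      rw [hA']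
      exact zero_mem_sepSet T

end
end

section
/- Let G be a finite abelian group with at least P elements. Then every P-separable operator A on H = H₁⊗⋯⊗Hₘ can be represented as A = Σ_{g∈G} |(Φ¹⋆⋯⋆Φᵐ)(g)⟩⟨(Φ¹⋆⋯⋆Φᵐ)(g)| for suitable mappings Φ^μ : G → H_μ. -/
noncomputable section

lemma addChar_map_sum {A M ι : Type*} [AddCommMonoid A] [CommMonoid M]
    (ψ : AddChar A M) (s : Finset ι) (f : ι → A) :
    ψ (∑ i ∈ s, f i) = ∏ i ∈ s, ψ (f i) := by
  classical
  induction s using Finset.cons_induction with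
  | empty => simp
  | cons i s hi ih => rw [Finset.sum_cons, Finset.prod_cons, AddChar.map_add_eq_mul, ih]

lemma addChar_sum_conj_mul {G : Type*} [AddCommGroup G] [Fintype G]
    (ψ₁ ψ₂ : AddChar G ℂ) :
    ∑ g : G, (starRingEnd ℂ) (ψ₁ g) * ψ₂ g
      = if ψ₁ = ψ₂ then (Fintype.card G : ℂ) else 0 := by
  classical
  have h : ∀ g : G, (starRingEnd ℂ) (ψ₁ g) * ψ₂ g = (ψ₁⁻¹ * ψ₂) g := by
    intro g
    rw [AddChar.mul_apply, AddChar.inv_apply', AddChar.inv_apply_eq_conj]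
  simp_rw [h]
  rw [AddChar.sum_eq_ite]
  congr 1
  rw [show (0 : AddChar G ℂ) = 1 from rfl, inv_mul_eq_one, eq_comm]

lemma fin_cons_const {n : ℕ} {α : Type*} (a : α) :
    (Fin.cons a (fun _ : Fin n => a) : Fin (n+1) → α) = fun _ => a := by
  funext i
  refine Fin.cases ?_ ?_ i <;> simp

lemma rankOne_apply' {E : Type*} [NormedAddCommGroup E] [InnerProductSpace ℂ E]
    (u x : E) : rankOne u x = (inner ℂ u x : ℂ) • u := by
  simp [rankOne]

variable {m : ℕ} {H : Fin (m + 1) → Type*}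
  [∀ μ, NormedAddCommGroup (H μ)] [∀ μ, InnerProductSpace ℂ (H μ)]
  {E : Type*} [NormedAddCommGroup E] [InnerProductSpace ℂ E]

/-- If `|G| ≥ P`, every `P`-separable operator is representable as
`Σ_g |(Φ¹⋆⋯⋆Φᵐ)(g)⟩⟨(Φ¹⋆⋯⋆Φᵐ)(g)|`. -/
theorem p_separable_exists_tensorConv
    [∀ μ, FiniteDimensional ℂ (H μ)] [FiniteDimensional ℂ E]
    {G : Type*} [AddCommGroup G] [Fintype G]
    (T : MultilinearMap ℂ H E)
    (hT : ∀ v w : ∀ μ, H μ, (inner ℂ (T v) (T w) : ℂ) = ∏ μ, (inner ℂ (v μ) (w μ) : ℂ))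
    {P : ℕ} (hP : P ≤ Fintype.card G)
    (v : Fin P → ∀ μ, H μ) (A : E →L[ℂ] E) (hA : A = ∑ p, rankOne (T (v p))) :
    ∃ Φ : ∀ μ, G → H μ, A = ∑ g : G, rankOne (tensorConv T Φ g) := by
  classical
  obtain ⟨ι⟩ : Nonempty (Fin P ↪ AddChar G ℂ) := by
    apply Function.Embedding.nonempty_of_card_le
    simpa using hP
  set n : ℕ := Fintype.card G with hn
  have hnR : (0:ℝ) < (n:ℝ) := by exact_mod_cast Fintype.card_pos
  set s : ℝ := (Real.sqrt n)⁻¹ with hs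
  set β : ℂ := ((s / (n:ℝ)^m : ℝ) : ℂ) with hβ
  set a : Fin P → G → ℂ := fun p g => (s : ℂ) * ι p g with ha
  set w : Fin P → E := fun p => T (v p) with hw
  have hβn : β * (n : ℂ)^m = (s : ℂ) := by
    have h1 : ((n:ℝ)^m : ℝ) ≠ 0 := by positivity
    rw [hβ]
    push_cast
    field_simp
    exact mul_div_cancel_right₀ _ (pow_ne_zero _ (by exact_mod_cast hnR.ne'))
  have hs2 : (s : ℂ) * (s : ℂ) * (n : ℂ) = 1 := by
    have : s * s * (n:ℝ) = 1 := by
      rw [hs, ← Real.sqrt_mul_self hnR.le]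
      have h2 : Real.sqrt n ≠ 0 := by positivity
      field_simp
      rw [Real.sq_sqrt (Real.sqrt_nonneg _)]
    calc (s : ℂ) * (s : ℂ) * (n : ℂ) = ((s * s * (n:ℝ) : ℝ) : ℂ) := by push_cast; ring
    _ = 1 := by rw [this]; norm_num
  set Φ : ∀ μ, G → H μ := fun μ g => ∑ p, ((if μ = 0 then β else 1) * ι p g) • v p μ with hΦ
  have haorth : ∀ p q : Fin P, ∑ g : G, (starRingEnd ℂ) (a p g) * a q g
      = if p = q then (1:ℂ) else 0 := by
    intro p q
    have : ∀ g : G, (starRingEnd ℂ) (a p g) * a q g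
        = ((s:ℂ) * (s:ℂ)) * ((starRingEnd ℂ) (ι p g) * ι q g) := by
      intro g
      simp only [ha, map_mul, Complex.conj_ofReal]
      ring
    simp_rw [this, ← Finset.mul_sum, addChar_sum_conj_mul]
    by_cases h : p = q
    · simp only [h, if_pos rfl]
      exact hs2
    · rw [if_neg (fun hh => h (ι.injective hh)), if_neg h, mul_zero]
  have hconv : ∀ g : G, tensorConv T Φ g = ∑ p, a p g • w p := by
    intro g
    have step1 : tensorConv T Φ g
        = ∑ k : Fin m → G, ∑ r : Fin (m+1) → Fin P,
            (∏ μ, ((if μ = 0 then β else 1)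
              * ι (r μ) (Fin.cons (α := fun _ => G) (g - ∑ j, k j) k μ)))
              • T (fun μ => v (r μ) μ) := by
      rw [tensorConv]
      refine Finset.sum_congr rfl fun k _ => ?_
      rw [show (fun μ => Φ μ (Fin.cons (α := fun _ => G) (g - ∑ j, k j) k μ))
          = fun μ => ∑ p : Fin P,
              ((if μ = 0 then β else 1)
                * ι p (Fin.cons (α := fun _ => G) (g - ∑ j, k j) k μ)) • v p μ from rfl]
      rw [T.map_sum]
      exact Finset.sum_congr rfl fun r _ => T.map_smul_univ _ _
    have hscal : ∀ (r : Fin (m+1) → Fin P),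
        (∑ k : Fin m → G, ∏ μ, ((if μ = 0 then β else 1)
            * ι (r μ) (Fin.cons (α := fun _ => G) (g - ∑ j, k j) k μ)))
        = β * ι (r 0) g * (if (∀ j : Fin m, r j.succ = r 0) then (n:ℂ)^m else 0) := by
      intro r
      have h1 : ∀ k : Fin m → G,
          (∏ μ, ((if μ = 0 then β else 1)
            * ι (r μ) (Fin.cons (α := fun _ => G) (g - ∑ j, k j) k μ)))
          = β * ι (r 0) g * ∏ j : Fin m, (((ι (r 0))⁻¹ * ι (r j.succ)) (k j)) := by
        intro k
        rw [Fin.prod_univ_succ]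
        have e0 : (if (0 : Fin (m+1)) = 0 then β else 1) = β := if_pos rfl
        have es : ∀ j : Fin m, (if (j.succ : Fin (m+1)) = 0 then β else 1) = 1 :=
          fun j => if_neg (Fin.succ_ne_zero j)
        simp only [Fin.cons_zero, Fin.cons_succ, e0, es, one_mul, eq_self_iff_true, ite_true]
        rw [AddChar.map_sub_eq_div, addChar_map_sum]
        simp only [AddChar.mul_apply, AddChar.inv_apply']
        rw [div_eq_mul_inv, Finset.prod_mul_distrib, Finset.prod_inv_distrib]
        ring
      simp_rw [h1]
      rw [← Finset.mul_sum]
      have h2 : (∑ k : Fin m → G, ∏ j : Fin m, (((ι (r 0))⁻¹ * ι (r j.succ)) (k j)))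
          = ∏ j : Fin m, ∑ h : G, (((ι (r 0))⁻¹ * ι (r j.succ)) h) := by
        rw [Finset.prod_univ_sum]
        rw [Fintype.piFinset_univ]
      rw [h2]
      congr 1
      have h3 : ∀ j : Fin m, (∑ h : G, (((ι (r 0))⁻¹ * ι (r j.succ)) h))
          = if r j.succ = r 0 then (n:ℂ) else 0 := by
        intro j
        rw [AddChar.sum_eq_ite]
        congr 1
        rw [show (0 : AddChar G ℂ) = 1 from rfl, inv_mul_eq_one]
        exact propext ⟨fun hh => (ι.injective hh).symm, fun hh => (congrArg ι hh).symm⟩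
      simp_rw [h3]
      by_cases h : ∀ j : Fin m, r j.succ = r 0
      · simp [h]
      · rw [if_neg h]
        obtain ⟨j, hj⟩ := not_forall.1 h
        exact Finset.prod_eq_zero (Finset.mem_univ j) (by rw [if_neg hj])
    rw [step1, Finset.sum_comm]
    simp_rw [← Finset.sum_smul, hscal]
    rw [← (Fin.consEquiv (fun _ : Fin (m+1) => Fin P)).sum_comp]
    rw [Fintype.sum_prod_type]
    have h4 : ∀ (p : Fin P) (t : Fin m → Fin P),
        (β * ι ((Fin.consEquiv (fun _ : Fin (m+1) => Fin P)) (p, t) 0) g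
          * (if (∀ j : Fin m, (Fin.consEquiv (fun _ : Fin (m+1) => Fin P)) (p, t) j.succ
              = (Fin.consEquiv (fun _ : Fin (m+1) => Fin P)) (p, t) 0) then (n:ℂ)^m else 0))
          • T (fun μ => v ((Fin.consEquiv (fun _ : Fin (m+1) => Fin P)) (p, t) μ) μ)
        = if t = (fun _ => p) then (a p g) • w p else 0 := by
      intro p t
      have hc0 : (Fin.consEquiv (fun _ : Fin (m+1) => Fin P)) (p, t) = Fin.cons p t := rfl
      rw [hc0]
      by_cases h : t = fun _ => p
      · subst h
        rw [if_pos rfl]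
        have hall : ∀ j : Fin m, (Fin.cons p (fun _ => p) : Fin (m+1) → Fin P) j.succ
            = (Fin.cons p (fun _ => p) : Fin (m+1) → Fin P) 0 := by
          intro j; simp
        have harg : (fun μ : Fin (m+1) =>
            v ((Fin.cons p (fun _ => p) : Fin (m+1) → Fin P) μ) μ) = v p := by
          funext μ; rw [fin_cons_const]
        rw [if_pos hall, harg]
        simp only [Fin.cons_zero, ha, hw]
        congr 1
        rw [mul_right_comm, hβn]
      · rw [if_neg h]
        have hnall : ¬ (∀ j : Fin m, (Fin.cons p t : Fin (m+1) → Fin P) j.succ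
            = (Fin.cons p t : Fin (m+1) → Fin P) 0) := by
          simp only [Fin.cons_succ, Fin.cons_zero]
          intro hh
          exact h (funext hh)
        rw [if_neg hnall, mul_zero, zero_smul]
    simp_rw [h4]
    refine Finset.sum_congr rfl fun p _ => ?_
    rw [Finset.sum_ite_eq' Finset.univ (fun _ : Fin m => p)
      (fun _ => (a p g) • w p), if_pos (Finset.mem_univ _)]
  -- final operator identity
  refine ⟨Φ, ?_⟩
  rw [hA]
  ext x
  simp only [ContinuousLinearMap.sum_apply, rankOne_apply']
  simp_rw [hconv]
  have expand : ∀ g : G, (inner ℂ (∑ p, a p g • w p) x : ℂ) • (∑ q, a q g • w q)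
      = ∑ q, ∑ p, (((starRingEnd ℂ) (a p g) * a q g) * (inner ℂ (w p) x : ℂ)) • w q := by
    intro g
    rw [Finset.smul_sum]
    refine Finset.sum_congr rfl fun q _ => ?_
    rw [smul_smul, sum_inner, Finset.sum_mul, Finset.sum_smul]
    refine Finset.sum_congr rfl fun p _ => ?_
    rw [inner_smul_left]
    congr 1
    ring
  simp_rw [expand]
  have final : ∀ q : Fin P,
      (∑ g : G, ∑ p, (((starRingEnd ℂ) (a p g) * a q g) * (inner ℂ (w p) x : ℂ)) • w q)
        = (inner ℂ (w q) x : ℂ) • w q := by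
    intro q
    rw [Finset.sum_comm]
    simp_rw [← Finset.sum_smul, ← Finset.sum_mul, haorth]
    simp [ite_mul, ite_smul]
  rw [Finset.sum_comm]
  exact (Finset.sum_congr rfl fun q _ => final q).symm
end
end

section
/- Let n ≥ 1, G = ℤ/nℤ, m ≥ 2, and for each μ = 1,...,m let (e^μ_g)_{g∈G} be an orthonormal family in a finite-dimensional complex Hilbert space H_μ. Define v^μ : G → H_μ by v^μ(g) = e^μ_g. Then for every g ∈ G, the partial trace over H₂⊗⋯⊗Hₘ of the projector |(v¹⋆⋯⋆vᵐ)(g)⟩⟨(v¹⋆⋯⋆vᵐ)(g)| equals n^{m−2} times the orthogonal projection onto the span of (e¹_k)_{k∈G} in H₁ (which is n^{m−2}·Id if dim H₁ = n). -/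
noncomputable section

variable {m : ℕ} {ι : Fin (m + 2) → Type*} [∀ μ, Fintype (ι μ)] [∀ μ, DecidableEq (ι μ)]

/-- The coordinates of the tensor convolution `(v¹⋆⋯⋆vᵐ)(g)` of the maps
`v^μ = e^μ : G → H_μ`, where `H_μ = EuclideanSpace ℂ (ι μ)` and the `m+2`-fold tensor
product is realized as `EuclideanSpace ℂ (Π μ, ι μ)`. -/
def tensorConvCoord {n : ℕ} [NeZero n] (e : ∀ μ, ZMod n → EuclideanSpace ℂ (ι μ))
    (g : ZMod n) : (∀ μ, ι μ) → ℂ :=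
  fun i => ∑ k : Fin (m + 1) → ZMod n,
    ∏ μ, e μ (Fin.cons (α := fun _ => ZMod n) (g - ∑ j, k j) k μ) (i μ)

/-- The matrix of the rank-one operator `|u⟩⟨u|` in coordinates. -/
def rankOneMatrix {I : Type*} (u : I → ℂ) : Matrix I I ℂ :=
  fun p q => u p * (starRingEnd ℂ) (u q)

/-- The partial trace over all but the first tensor factor: the unique linear map with
`Tr₂…ₘ(A ⊗ B) = A · Tr B`. -/
def partialTraceFirst (M : Matrix (∀ μ, ι μ) (∀ μ, ι μ) ℂ) : Matrix (ι 0) (ι 0) ℂ :=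
  fun a b => ∑ t : ∀ j : Fin (m + 1), ι j.succ,
    M (Fin.cons (α := ι) a t) (Fin.cons (α := ι) b t)

lemma sum_shift {n : ℕ} [NeZero n] (m : ℕ) (F : ZMod n → ℂ) (g : ZMod n) :
    ∑ k : Fin (m + 1) → ZMod n, F (g - ∑ j, k j)
      = (n : ℂ) ^ m * ∑ c : ZMod n, F c := by
  induction m generalizing g with
  | zero =>
    rw [pow_zero, one_mul]
    rw [← Equiv.sum_comp (Equiv.funUnique (Fin 1) (ZMod n)).symm
      (fun k : Fin 1 → ZMod n => F (g - ∑ j, k j))]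
    rw [← Equiv.sum_comp (Equiv.subLeft g) F]
    simp [Equiv.funUnique]
  | succ m ih =>
    rw [← Equiv.sum_comp (Fin.consEquiv (fun _ : Fin (m+2) => ZMod n))
      (fun k : Fin (m+2) → ZMod n => F (g - ∑ j, k j))]
    rw [Fintype.sum_prod_type]
    have : ∀ x : ZMod n,
        ∑ k : Fin (m+1) → ZMod n, F (g - ∑ j, (Fin.consEquiv _ (x, k)) j)
          = (n : ℂ) ^ m * ∑ c : ZMod n, F c := by
      intro x
      rw [← ih (g - x)]
      refine Finset.sum_congr rfl fun k _ => ?_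
      congr 1
      simp [Fin.consEquiv, Fin.sum_univ_succ, sub_sub]
    simp only [this]
    rw [Finset.sum_const, Finset.card_univ, ZMod.card, nsmul_eq_mul]
    ring

lemma coord_cons {n : ℕ} [NeZero n] (e : ∀ μ, ZMod n → EuclideanSpace ℂ (ι μ))
    (g : ZMod n) (a : ι 0) (t : ∀ j : Fin (m + 1), ι j.succ) :
    tensorConvCoord e g (Fin.cons (α := ι) a t)
      = ∑ k : Fin (m + 1) → ZMod n,
          e 0 (g - ∑ j, k j) a * ∏ j : Fin (m + 1), e j.succ (k j) (t j) := by
  unfold tensorConvCoord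
  refine Finset.sum_congr rfl fun k _ => ?_
  rw [Fin.prod_univ_succ]
  rfl

/-- For `v^μ(g) = e^μ_g` with `(e^μ_g)_{g ∈ ℤ/n}` orthonormal families
(in `m+2 ≥ 2` factors), the partial trace over all but the first factor of
`|(v¹⋆⋯⋆vᵐ)(g)⟩⟨(v¹⋆⋯⋆vᵐ)(g)|` equals `n^{(m+2)−2}` times the orthogonal projection onto
the span of `(e¹_k)_{k ∈ ℤ/n}`. -/
theorem partialTrace_rankOne_tensorConv
    {n : ℕ} [NeZero n] (e : ∀ μ, ZMod n → EuclideanSpace ℂ (ι μ))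
    (he : ∀ μ, Orthonormal ℂ (e μ)) (g : ZMod n) :
    partialTraceFirst (rankOneMatrix (tensorConvCoord e g))
      = ((n : ℂ) ^ m) • ∑ k : ZMod n, rankOneMatrix (fun a => e 0 k a) := by
  have horth : ∀ (μ : Fin (m+2)) (x y : ZMod n),
      (∑ s, e μ x s * (starRingEnd ℂ) (e μ y s)) = if x = y then 1 else 0 := by
    intro μ x y
    have h := (orthonormal_iff_ite (𝕜 := ℂ)).mp (he μ) y x
    rw [PiLp.inner_apply] at h
    simp only [RCLike.inner_apply] at h
    calc (∑ s, e μ x s * (starRingEnd ℂ) (e μ y s))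
        = ∑ s, e μ x s * (starRingEnd ℂ) (e μ y s) := by
          exact Finset.sum_congr rfl fun s _ => rfl
      _ = if x = y then 1 else 0 := by
          rw [h]
          exact if_congr eq_comm rfl rfl
  ext a b
  show (∑ t : ∀ j : Fin (m + 1), ι j.succ, _) = _
  simp only [partialTraceFirst, rankOneMatrix, coord_cons, Matrix.smul_apply,
    Matrix.sum_apply, map_sum, map_mul, map_prod, Finset.sum_mul_sum]
  rw [Finset.sum_comm]
  -- now: ∑ k, ∑ t, ∑ k', ...
  have key : ∀ k : Fin (m+1) → ZMod n,
      (∑ t : ∀ j : Fin (m + 1), ι j.succ, ∑ k' : Fin (m+1) → ZMod n,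
        e 0 (g - ∑ j, k j) a * (∏ j, e j.succ (k j) (t j)) *
          ((starRingEnd ℂ) (e 0 (g - ∑ j, k' j) b) *
            ∏ j, (starRingEnd ℂ) (e j.succ (k' j) (t j))))
      = e 0 (g - ∑ j, k j) a * (starRingEnd ℂ) (e 0 (g - ∑ j, k j) b) := by
    intro k
    rw [Finset.sum_comm]
    have inner : ∀ k' : Fin (m+1) → ZMod n,
        (∑ t : ∀ j : Fin (m + 1), ι j.succ,
          e 0 (g - ∑ j, k j) a * (∏ j, e j.succ (k j) (t j)) *
            ((starRingEnd ℂ) (e 0 (g - ∑ j, k' j) b) *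
              ∏ j, (starRingEnd ℂ) (e j.succ (k' j) (t j))))
        = e 0 (g - ∑ j, k j) a * (starRingEnd ℂ) (e 0 (g - ∑ j, k' j) b) *
            if k = k' then 1 else 0 := by
      intro k'
      have : (∑ t : ∀ j : Fin (m + 1), ι j.succ,
          (∏ j, e j.succ (k j) (t j)) * ∏ j, (starRingEnd ℂ) (e j.succ (k' j) (t j)))
          = if k = k' then 1 else 0 := by
        have := Finset.prod_univ_sum (κ := fun j : Fin (m+1) => ι j.succ)
          (t := fun j => Finset.univ)
          (f := fun j s => e j.succ (k j) s * (starRingEnd ℂ) (e j.succ (k' j) s))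
        rw [Fintype.piFinset_univ] at this
        simp only [← Finset.prod_mul_distrib]
        rw [← this]
        simp only [horth]
        rw [Finset.prod_boole]
        congr 1
        simp [funext_iff]
      calc _ = e 0 (g - ∑ j, k j) a * (starRingEnd ℂ) (e 0 (g - ∑ j, k' j) b) *
            ∑ t : ∀ j : Fin (m + 1), ι j.succ,
              (∏ j, e j.succ (k j) (t j)) * ∏ j, (starRingEnd ℂ) (e j.succ (k' j) (t j)) := by
              rw [Finset.mul_sum]; exact Finset.sum_congr rfl fun t _ => by ring
        _ = _ := by rw [this]
    simp only [inner, mul_ite, mul_one, mul_zero]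
    rw [Finset.sum_ite_eq]
    simp
  simp only [key]
  rw [sum_shift m (fun c => e 0 c a * (starRingEnd ℂ) (e 0 c b)) g, smul_eq_mul]
end
end
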